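/- If m is odd and A is a symmetric P_0 tensor of order m and dimension n, then A is the zero tensor. -/

import Mathlib

open Finset

noncomputable section

/-- The contraction `(A x^{m})_i` of an order-`m+1` tensor with `m` copies of `x`. -/
def contrT {m n : ℕ} (A : (Fin (m+1) → Fin n) → ℝ) (x : Fin n → ℝ) (i : Fin n) : ℝ :=
  ∑ f : Fin m → Fin n, A (Fin.cons i f) * ∏ k, x (f k)

/-- `A x^M` for an order-`M` tensor. -/
def polyT {M n : ℕ} (A : (Fin M → Fin n) → ℝ) (x : Fin n → ℝ) : ℝ :=
  ∑ f : Fin M → Fin n, A f * ∏ k, x (f k)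

/-- P tensor: for every nonzero `x`, `max_i x_i (A x^{m-1})_i > 0`. -/
def IsPTensor {m n : ℕ} (A : (Fin (m+1) → Fin n) → ℝ) : Prop :=
  ∀ x : Fin n → ℝ, x ≠ 0 → ∃ i : Fin n, 0 < x i * contrT A x i

/-- P₀ tensor: for every nonzero `x` there is `i` with `x i ≠ 0` and `x_i (A x^{m-1})_i ≥ 0`. -/
def IsP0Tensor {m n : ℕ} (A : (Fin (m+1) → Fin n) → ℝ) : Prop :=
  ∀ x : Fin n → ℝ, x ≠ 0 → ∃ i : Fin n, x i ≠ 0 ∧ 0 ≤ x i * contrT A x i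

def infNorm {n : ℕ} (x : Fin n → ℝ) : ℝ := ⨆ i, |x i|

/-- The operator `T_A(x) = ‖x‖₂^{2-m} A x^{m-1}` (order of the tensor is `m+1`). -/
def TA {m n : ℕ} (A : (Fin (m+1) → Fin n) → ℝ) (x : Fin n → ℝ) (i : Fin n) : ℝ :=
  if x = 0 then 0
  else (Real.sqrt (∑ j, x j ^ 2)) ^ ((2 : ℤ) - ((m : ℤ) + 1)) * contrT A x i

/-- `α(T_A) = min_{‖x‖_∞ = 1} max_i x_i (T_A(x))_i`. -/
def alphaT {m n : ℕ} (A : (Fin (m+1) → Fin n) → ℝ) : ℝ :=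
  sInf ((fun x => ⨆ i, x i * TA A x i) '' {x : Fin n → ℝ | infNorm x = 1})

/-- B tensor of order `m+1`. -/
def IsBTensor {m n : ℕ} (B : (Fin (m+1) → Fin n) → ℝ) : Prop :=
  ∀ i : Fin n, (0 < ∑ f : Fin m → Fin n, B (Fin.cons i f)) ∧
    ∀ g : Fin m → Fin n, g ≠ (fun _ => i) →
      B (Fin.cons i g) < (1 / (n : ℝ) ^ m) * ∑ f : Fin m → Fin n, B (Fin.cons i f)

/-- B₀ tensor of order `m+1`. -/
def IsB0Tensor {m n : ℕ} (B : (Fin (m+1) → Fin n) → ℝ) : Prop :=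
  ∀ i : Fin n, (0 ≤ ∑ f : Fin m → Fin n, B (Fin.cons i f)) ∧
    ∀ g : Fin m → Fin n, g ≠ (fun _ => i) →
      B (Fin.cons i g) ≤ (1 / (n : ℝ) ^ m) * ∑ f : Fin m → Fin n, B (Fin.cons i f)


section AuxStmt7

variable {M n : ℕ}

lemma polyT_continuous' (A : (Fin M → Fin n) → ℝ) : Continuous (polyT A) := by
  unfold polyT
  exact continuous_finset_sum _ fun f _ =>
    continuous_const.mul (continuous_finset_prod _ fun k _ => continuous_apply (f k))

lemma polyT_homog' (A : (Fin M → Fin n) → ℝ) (c : ℝ) (x : Fin n → ℝ) :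
    polyT A (c • x) = c ^ M * polyT A x := by
  unfold polyT
  rw [Finset.mul_sum]
  refine Finset.sum_congr rfl fun f _ => ?_
  simp only [Pi.smul_apply, smul_eq_mul, Finset.prod_mul_distrib, Finset.prod_const,
    Finset.card_univ, Fintype.card_fin]
  ring

/-- The equiv `(i, g) ↦ Fin.cons i g`. -/
def consE (M n : ℕ) : Fin n × (Fin M → Fin n) ≃ (Fin (M+1) → Fin n) :=
  Fin.consEquiv fun _ => Fin n

lemma consE_apply (p : Fin n × (Fin M → Fin n)) :
    consE M n p = Fin.cons p.1 p.2 := rfl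

lemma prod_cons' (x : Fin n → ℝ) (i : Fin n) (g : Fin M → Fin n) :
    ∏ k : Fin (M+1), x ((Fin.cons i g : Fin (M+1) → Fin n) k)
      = x i * ∏ k : Fin M, x (g k) := by
  rw [Fin.prod_univ_succ]
  simp

lemma polyT_eq_sum' (A : (Fin (M+1) → Fin n) → ℝ) (x : Fin n → ℝ) :
    polyT A x = ∑ i, x i * contrT A x i := by
  unfold polyT contrT
  rw [← Fintype.sum_equiv (consE M n)
    (fun p : Fin n × (Fin M → Fin n) => A (consE M n p) * ∏ k : Fin (M+1), x (consE M n p k))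
    (fun f : Fin (M+1) → Fin n => A f * ∏ k : Fin (M+1), x (f k)) (fun p => rfl)]
  rw [Fintype.sum_prod_type]
  refine Finset.sum_congr rfl fun i _ => ?_
  rw [Finset.mul_sum]
  refine Finset.sum_congr rfl fun g _ => ?_
  rw [consE_apply, prod_cons']
  ring

lemma perm_image_erase' {α : Type*} [DecidableEq α] [Fintype α] (σ : Equiv.Perm α) (a : α) :
    ((univ : Finset α).erase a).image σ = univ.erase (σ a) := by
  ext j
  simp only [Finset.mem_image, Finset.mem_erase, Finset.mem_univ, and_true, true_and]
  constructor
  · rintro ⟨b, hb, rfl⟩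
    exact fun hc => hb (σ.injective hc)
  · intro hj
    exact ⟨σ.symm j, fun hc => hj (by rw [← hc]; simp), by simp⟩

lemma polyT_line_hasDerivAt' (A : (Fin M → Fin n) → ℝ) (x v : Fin n → ℝ) :
    HasDerivAt (fun t : ℝ => polyT A (x + t • v))
      (∑ f : Fin M → Fin n, A f *
        ∑ k, (∏ k' ∈ univ.erase k, x (f k')) * v (f k)) 0 := by
  simp only [polyT, Pi.add_apply, Pi.smul_apply, smul_eq_mul]
  apply HasDerivAt.fun_sum
  intro f _
  have h : ∀ k ∈ (univ : Finset (Fin M)),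
      HasDerivAt (fun t : ℝ => x (f k) + t * v (f k)) (v (f k)) 0 := by
    intro k _
    simpa using ((hasDerivAt_id (0:ℝ)).mul_const (v (f k))).const_add (x (f k))
  have hp := HasDerivAt.fun_finsetProd h
  have h2 := hp.const_mul (A f)
  refine h2.congr_deriv ?_
  congr 1
  refine Finset.sum_congr rfl fun k _ => ?_
  simp

lemma sym_deriv' (A : (Fin (M+1) → Fin n) → ℝ)
    (hsym : ∀ (σ : Equiv.Perm (Fin (M+1))) (f : Fin (M+1) → Fin n), A (f ∘ σ) = A f)
    (x v : Fin n → ℝ) :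
    ∑ f : Fin (M+1) → Fin n, A f * ∑ k, (∏ k' ∈ univ.erase k, x (f k')) * v (f k)
      = ((M:ℝ)+1) * ∑ i, v i * contrT A x i := by
  have key : ∀ k : Fin (M+1),
      (∑ f : Fin (M+1) → Fin n, A f * ((∏ k' ∈ univ.erase k, x (f k')) * v (f k)))
        = ∑ f : Fin (M+1) → Fin n,
            A f * ((∏ k' ∈ univ.erase (0:Fin (M+1)), x (f k')) * v (f 0)) := by
    intro k
    set σ := Equiv.swap (0 : Fin (M+1)) k with hσ
    have hσk : σ k = 0 := Equiv.swap_apply_right 0 k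
    let e : (Fin (M+1) → Fin n) ≃ (Fin (M+1) → Fin n) :=
      { toFun := fun f => f ∘ σ
        invFun := fun f => f ∘ σ.symm
        left_inv := fun f => by funext j; simp
        right_inv := fun f => by funext j; simp }
    rw [← Fintype.sum_equiv e
      (fun f : Fin (M+1) → Fin n =>
        A (f ∘ σ) * ((∏ k' ∈ univ.erase k, x ((f ∘ σ) k')) * v ((f ∘ σ) k)))
      (fun f : Fin (M+1) → Fin n => A f * ((∏ k' ∈ univ.erase k, x (f k')) * v (f k)))
      (fun f => rfl)]
    refine Finset.sum_congr rfl fun f _ => ?_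
    rw [hsym σ f]
    congr 1
    have h0 : (f ∘ σ) k = f 0 := by simp [Function.comp, hσk]
    rw [h0]
    congr 1
    have himg : ∏ k' ∈ univ.erase k, x ((f ∘ σ) k')
        = ∏ j ∈ (univ.erase k).image σ, x (f j) := by
      rw [Finset.prod_image (fun a _ b _ h => σ.injective h)]
      rfl
    rw [himg, perm_image_erase' σ k, hσk]
  have lhs_eq : (∑ f : Fin (M+1) → Fin n,
        A f * ∑ k, (∏ k' ∈ univ.erase k, x (f k')) * v (f k))
      = ∑ k : Fin (M+1), ∑ f : Fin (M+1) → Fin n,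
          A f * ((∏ k' ∈ univ.erase k, x (f k')) * v (f k)) := by
    rw [Finset.sum_comm]
    refine Finset.sum_congr rfl fun f _ => ?_
    rw [Finset.mul_sum]
  rw [lhs_eq]
  have base : (∑ f : Fin (M+1) → Fin n,
        A f * ((∏ k' ∈ univ.erase (0:Fin (M+1)), x (f k')) * v (f 0)))
      = ∑ i, v i * contrT A x i := by
    rw [← Fintype.sum_equiv (consE M n)
      (fun p : Fin n × (Fin M → Fin n) => A (consE M n p) *
        ((∏ k' ∈ univ.erase (0:Fin (M+1)), x (consE M n p k')) * v (consE M n p 0)))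
      (fun f : Fin (M+1) → Fin n =>
        A f * ((∏ k' ∈ univ.erase (0:Fin (M+1)), x (f k')) * v (f 0)))
      (fun p => rfl)]
    rw [Fintype.sum_prod_type]
    unfold contrT
    refine Finset.sum_congr rfl fun i _ => ?_
    rw [Finset.mul_sum]
    refine Finset.sum_congr rfl fun g _ => ?_
    have hpe : ∏ k' ∈ univ.erase (0:Fin (M+1)), x (consE M n (i, g) k')
        = ∏ k : Fin M, x (g k) := by
      have himg : ((univ : Finset (Fin (M+1))).erase 0) = univ.image Fin.succ := by
        ext j
        simp only [Finset.mem_erase, Finset.mem_univ, and_true, Finset.mem_image, true_and]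
        constructor
        · intro hj
          exact ⟨j.pred hj, by simp⟩
        · rintro ⟨a, rfl⟩
          exact Fin.succ_ne_zero a
      rw [himg, Finset.prod_image (fun a _ b _ h => Fin.succ_injective _ h)]
      simp [consE_apply]
    rw [hpe]
    simp only [consE_apply, Fin.cons_zero]
    ring
  simp only [key, base]
  rw [Finset.sum_const, Finset.card_univ, Fintype.card_fin, nsmul_eq_mul]
  push_cast
  ring

lemma deriv_line' (A : (Fin (M+1) → Fin n) → ℝ)
    (hsym : ∀ (σ : Equiv.Perm (Fin (M+1))) (f : Fin (M+1) → Fin n), A (f ∘ σ) = A f)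
    (x v : Fin n → ℝ) :
    HasDerivAt (fun t : ℝ => polyT A (x + t • v))
      (((M:ℝ)+1) * ∑ i, v i * contrT A x i) 0 := by
  have h := polyT_line_hasDerivAt' A x v
  rwa [sym_deriv' A hsym x v] at h

lemma polar_zero' : ∀ (M : ℕ) {n : ℕ} (A : (Fin M → Fin n) → ℝ),
    (∀ (σ : Equiv.Perm (Fin M)) (f : Fin M → Fin n), A (f ∘ σ) = A f) →
    (∀ x, polyT A x = 0) → A = 0 := by
  intro M
  induction M with
  | zero =>
    intro n A _ h0
    funext f
    have h := h0 0
    have huniq : ∀ g : Fin 0 → Fin n, g = f := fun g => funext fun k => k.elim0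
    unfold polyT at h
    rw [show (univ : Finset (Fin 0 → Fin n)) = {f} from
      Finset.eq_singleton_iff_unique_mem.mpr ⟨Finset.mem_univ f, fun g _ => huniq g⟩] at h
    simpa using h
  | succ M ih =>
    intro n A hsym h0
    have hc : ∀ (x : Fin n → ℝ) (i : Fin n), contrT A x i = 0 := by
      intro x i
      have h1 := deriv_line' A hsym x (Pi.single i 1 : Fin n → ℝ)
      have h2 : (fun t : ℝ => polyT A (x + t • (Pi.single i 1 : Fin n → ℝ))) = fun _ => (0:ℝ) :=
        funext fun t => h0 _
      rw [h2] at h1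
      have h3 := h1.unique (hasDerivAt_const 0 0)
      have hM : ((M:ℝ)+1) ≠ 0 := by positivity
      have h4 : (∑ j, (Pi.single i 1 : Fin n → ℝ) j * contrT A x j) = 0 :=
        (mul_eq_zero.mp h3).resolve_left hM
      simpa [Pi.single_apply] using h4
    funext f
    have hBi : (fun g : Fin M → Fin n => A (Fin.cons (f 0) g)) = 0 := by
      apply ih
      · intro σ g
        have hτ : (Fin.cons (f 0) g : Fin (M+1) → Fin n) ∘
            (Equiv.Perm.decomposeFin.symm (0, σ)) = Fin.cons (f 0) (g ∘ σ) := by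
          funext k
          refine Fin.cases ?_ (fun j => ?_) k
          · simp
          · simp [Equiv.Perm.decomposeFin_symm_apply_succ, Equiv.swap_self]
        have h5 := hsym (Equiv.Perm.decomposeFin.symm (0, σ)) (Fin.cons (f 0) g)
        rw [hτ] at h5
        exact h5
      · intro x
        have h6 := hc x (f 0)
        unfold contrT at h6
        exact h6
    have h7 := congrFun hBi (Fin.tail f)
    simpa [Fin.cons_self_tail] using h7

end AuxStmt7

theorem stmt7 (m n : ℕ) (hm : Odd (m + 1))
    (A : (Fin (m+1) → Fin n) → ℝ)
    (hsym : ∀ (σ : Equiv.Perm (Fin (m+1))) (f : Fin (m+1) → Fin n), A (f ∘ σ) = A f)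
    (hP0 : IsP0Tensor A) :
    A = 0 := by
  rcases Nat.eq_zero_or_pos n with hn | hn
  · subst hn
    funext f
    exact (f 0).elim0
  haveI : NeZero n := ⟨hn.ne'⟩
  -- polyT at 0 is 0
  have hz : polyT A (0 : Fin n → ℝ) = 0 := by
    simp [polyT, Finset.prod_const, Finset.card_univ, Fintype.card_fin,
      zero_pow (Nat.succ_ne_zero m)]
  set S : Set (Fin n → ℝ) := {x | (∑ j, x j ^ 2) = 1} with hSdef
  have hcont := polyT_continuous' A
  have hclosed : IsClosed S :=
    isClosed_eq (continuous_finset_sum _ fun j _ => (continuous_apply j).pow 2) continuous_const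
  have hsub : S ⊆ Metric.closedBall 0 1 := by
    intro x hx
    rw [Metric.mem_closedBall, dist_zero_right]
    rw [pi_norm_le_iff_of_nonneg zero_le_one]
    intro i
    have h1 : x i ^ 2 ≤ 1 := by
      have := Finset.single_le_sum (f := fun j => x j ^ 2)
        (fun j _ => sq_nonneg (x j)) (Finset.mem_univ i)
      rw [hx] at this
      exact this
    rw [Real.norm_eq_abs]
    nlinarith [abs_nonneg (x i), sq_abs (x i)]
  have hcomp : IsCompact S :=
    (isCompact_closedBall (0 : Fin n → ℝ) 1).of_isClosed_subset hclosed hsub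
  have hSne : S.Nonempty := by
    refine ⟨(Pi.single 0 1 : Fin n → ℝ), ?_⟩
    simp [hSdef, Pi.single_apply]
  obtain ⟨a, haS, hmin⟩ := hcomp.exists_isMinOn hSne hcont.continuousOn
  have haSum : (∑ j, a j ^ 2) = 1 := haS
  set μ := polyT A a with hμ
  have hminle : ∀ x ∈ S, μ ≤ polyT A x := fun x hx => (isMinOn_iff.mp hmin) x hx
  -- scaling lower bound
  have hlow : ∀ w : Fin n → ℝ, μ * Real.sqrt (∑ j, w j ^ 2) ^ (m+1) ≤ polyT A w := by
    intro w
    by_cases hw : w = 0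
    · subst hw
      simp [hz]
    · have hq : 0 < ∑ j, w j ^ 2 := by
        obtain ⟨j, hj⟩ := Function.ne_iff.mp hw
        refine Finset.sum_pos' (fun k _ => sq_nonneg _) ⟨j, Finset.mem_univ j, ?_⟩
        have : w j ≠ 0 := hj
        positivity
      set r := Real.sqrt (∑ j, w j ^ 2) with hr
      have hrpos : 0 < r := Real.sqrt_pos.mpr hq
      have hr2 : r ^ 2 = ∑ j, w j ^ 2 := Real.sq_sqrt hq.le
      have huS : r⁻¹ • w ∈ S := by
        simp only [hSdef, Set.mem_setOf_eq, Pi.smul_apply, smul_eq_mul, mul_pow]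
        rw [← Finset.mul_sum, ← hr2]
        field_simp
      have h1 := hminle _ huS
      have h2 : polyT A w = r ^ (m+1) * polyT A (r⁻¹ • w) := by
        rw [← polyT_homog']
        congr 1
        rw [smul_smul]
        rw [mul_inv_cancel₀ hrpos.ne', one_smul]
      rw [h2]
      have h3 := mul_le_mul_of_nonneg_left h1 (pow_nonneg hrpos.le (m+1))
      linarith [mul_comm μ (r ^ (m+1))]
  -- eigenvalue equation at the minimizer
  have heig : ∀ i : Fin n, contrT A a i = μ * a i := by
    intro i
    set v : Fin n → ℝ := Pi.single i 1 with hv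
    -- the penalized function
    set g : ℝ → ℝ := fun t =>
      polyT A (a + t • v) - μ * Real.sqrt (∑ j, (a j + t * v j) ^ 2) ^ (m+1) with hg
    have hsum_eq : ∀ t : ℝ, (∑ j, (a + t • v) j ^ 2) = ∑ j, (a j + t * v j) ^ 2 := by
      intro t
      refine Finset.sum_congr rfl fun j _ => ?_
      simp
    have hg0 : g 0 = 0 := by
      simp only [hg]
      have h0 : (a + (0:ℝ) • v) = a := by simp
      rw [h0]
      simp [haSum, Real.sqrt_one, hμ]
    have hgnn : ∀ t, 0 ≤ g t := by
      intro t
      have := hlow (a + t • v)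
      rw [hsum_eq t] at this
      simp only [hg]
      linarith
    -- derivative of g at 0
    have hq : HasDerivAt (fun t : ℝ => ∑ j, (a j + t * v j) ^ 2)
        (∑ j, 2 * a j * v j) 0 := by
      apply HasDerivAt.fun_sum
      intro j _
      have hb : HasDerivAt (fun t : ℝ => a j + t * v j) (v j) 0 := by
        simpa using ((hasDerivAt_id (0:ℝ)).mul_const (v j)).const_add (a j)
      simpa using hb.fun_pow 2
    have hq0 : (fun t : ℝ => ∑ j, (a j + t * v j) ^ 2) 0 = 1 := by
      simp only
      rw [← hsum_eq 0]
      simpa using haSum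
    have hsq : HasDerivAt (fun t : ℝ => Real.sqrt (∑ j, (a j + t * v j) ^ 2))
        ((1 / (2 * Real.sqrt 1)) * ∑ j, 2 * a j * v j) 0 := by
      have h2 : HasDerivAt Real.sqrt (1 / (2 * Real.sqrt 1))
          ((fun t : ℝ => ∑ j, (a j + t * v j) ^ 2) 0) := by
        rw [hq0]; exact Real.hasDerivAt_sqrt one_ne_zero
      exact h2.comp 0 hq
    have hsum2 : (∑ j, 2 * a j * v j) = 2 * ∑ j, a j * v j := by
      rw [Finset.mul_sum]
      exact Finset.sum_congr rfl fun j _ => by ring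
    have hpow : HasDerivAt (fun t : ℝ => Real.sqrt (∑ j, (a j + t * v j) ^ 2) ^ (m+1))
        (((m:ℝ)+1) * ∑ j, a j * v j) 0 := by
      have h := hsq.fun_pow (m+1)
      have hs1 : Real.sqrt ((fun t : ℝ => ∑ j, (a j + t * v j) ^ 2) 0) = 1 := by
        rw [hq0, Real.sqrt_one]
      refine h.congr_deriv ?_
      simp only [zero_mul, add_zero]
      rw [haSum, Real.sqrt_one, hsum2]
      push_cast
      ring
    have hG : HasDerivAt g
        ((((m:ℝ)+1) * ∑ j, v j * contrT A a j) - μ * (((m:ℝ)+1) * ∑ j, a j * v j)) 0 :=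
      (deriv_line' A hsym a v).sub (hpow.const_mul μ)
    have hloc : IsLocalMin g 0 := by
      apply Filter.Eventually.of_forall
      intro t
      rw [hg0]
      exact hgnn t
    have hD0 : ((((m:ℝ)+1) * ∑ j, v j * contrT A a j)
        - μ * (((m:ℝ)+1) * ∑ j, a j * v j)) = 0 := by
      have := hloc.deriv_eq_zero
      rw [hG.deriv] at this
      exact this
    have hv1 : (∑ j, v j * contrT A a j) = contrT A a i := by
      simp [hv, Pi.single_apply]
    have hv2 : (∑ j, a j * v j) = a i := by
      simp [hv, Pi.single_apply]
    rw [hv1, hv2] at hD0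
    have hm1 : ((m:ℝ)+1) ≠ 0 := by positivity
    have h9 : ((m:ℝ)+1) * (contrT A a i - μ * a i) = 0 := by linear_combination hD0
    have h10 := (mul_eq_zero.mp h9).resolve_left hm1
    linarith [h10]
  -- μ ≥ 0 from the P₀ property
  have ha0 : a ≠ 0 := by
    intro h
    rw [h] at haSum
    simp at haSum
  obtain ⟨i, hi, hge⟩ := hP0 a ha0
  rw [heig i] at hge
  have hμnn : 0 ≤ μ := by nlinarith [pow_two_pos_of_ne_zero hi]
  -- polyT vanishes on the sphere
  have hSzero : ∀ x ∈ S, polyT A x = 0 := by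
    intro x hx
    have hxneg : (-x) ∈ S := by
      simp only [hSdef, Set.mem_setOf_eq] at hx ⊢
      simpa using hx
    have h1 := hminle x hx
    have h2 := hminle _ hxneg
    have h3 : polyT A (-x) = -polyT A x := by
      have : (-x) = (-1 : ℝ) • x := by funext j; simp
      rw [this, polyT_homog', Odd.neg_one_pow hm]
      ring
    rw [h3] at h2
    linarith
  -- polyT vanishes everywhere
  have hall : ∀ x, polyT A x = 0 := by
    intro x
    by_cases hx : x = 0
    · subst hx; exact hz
    · have hq : 0 < ∑ j, x j ^ 2 := by
        obtain ⟨j, hj⟩ := Function.ne_iff.mp hx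
        refine Finset.sum_pos' (fun k _ => sq_nonneg _) ⟨j, Finset.mem_univ j, ?_⟩
        have : x j ≠ 0 := hj
        positivity
      set r := Real.sqrt (∑ j, x j ^ 2) with hr
      have hrpos : 0 < r := Real.sqrt_pos.mpr hq
      have hr2 : r ^ 2 = ∑ j, x j ^ 2 := Real.sq_sqrt hq.le
      have huS : r⁻¹ • x ∈ S := by
        simp only [hSdef, Set.mem_setOf_eq, Pi.smul_apply, smul_eq_mul, mul_pow]
        rw [← Finset.mul_sum, ← hr2]
        field_simp
      have h2 : polyT A x = r ^ (m+1) * polyT A (r⁻¹ • x) := by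
        rw [← polyT_homog']
        congr 1
        rw [smul_smul, mul_inv_cancel₀ hrpos.ne', one_smul]
      rw [h2, hSzero _ huS, mul_zero]
  exact polar_zero' (m+1) A hsym hall
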